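/- Every element of the quotient c₀/c₀₀ is an infinitesimal of c₀/c₀₀. Concretely: for every real sequence x : ℕ → ℝ with x(k) → 0, there exists a real sequence y : ℕ → ℝ with y(k) ≥ 0 for all k and y(k) → 0, such that for every n ∈ ℕ with n ≥ 1 the inequality n·|x(k)| ≤ y(k) holds for all but finitely many k (so that ±[x] ≤ (1/n)[y] in c₀/c₀₀ for all n ≥ 1). -/

import Mathlib

/-- Every element of `c₀/c₀₀` is an infinitesimal of `c₀/c₀₀`:
for every real sequence `x` tending to `0` there is a nonnegative real sequence
`y` tending to `0` such that for every `n ≥ 1`, `n·|x k| ≤ y k` for all but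
finitely many `k` (so `±[x] ≤ (1/n)·[y]` in `c₀/c₀₀` for every `n ≥ 1`). -/
theorem c0_quotient_infinitesimal (x : ℕ → ℝ)
    (hx : Filter.Tendsto x Filter.atTop (nhds 0)) :
    ∃ y : ℕ → ℝ, (∀ k, 0 ≤ y k) ∧ Filter.Tendsto y Filter.atTop (nhds 0) ∧
      ∀ n : ℕ, 1 ≤ n → ∀ᶠ k in Filter.atTop, (n : ℝ) * |x k| ≤ y k := by
  refine ⟨fun k => Real.sqrt |x k|, fun k => Real.sqrt_nonneg _, ?_, ?_⟩
  · have : Filter.Tendsto (fun k => |x k|) Filter.atTop (nhds 0) := by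
      simpa using hx.abs
    simpa [Function.comp_def] using (Real.continuous_sqrt.tendsto 0).comp this
  · intro n hn
    have hpos : (0 : ℝ) < n := by exact_mod_cast hn
    have h : ∀ᶠ k in Filter.atTop, |x k| < (1 / n) ^ 2 := by
      have habs : Filter.Tendsto (fun k => |x k|) Filter.atTop (nhds 0) := by
        simpa using hx.abs
      exact habs.eventually_lt_const (by positivity)
    filter_upwards [h] with k hk
    have h0 : (0:ℝ) ≤ |x k| := abs_nonneg _
    have hs : Real.sqrt |x k| ≤ 1 / n := by
      rw [show (1:ℝ)/n = Real.sqrt ((1/n)^2) by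
        rw [Real.sqrt_sq (by positivity)]]
      exact Real.sqrt_le_sqrt hk.le
    calc (n : ℝ) * |x k| = n * (Real.sqrt |x k| * Real.sqrt |x k|) := by
          rw [Real.mul_self_sqrt h0]
      _ ≤ n * (1 / n * Real.sqrt |x k|) := by
          apply mul_le_mul_of_nonneg_left (mul_le_mul_of_nonneg_right hs (Real.sqrt_nonneg _)) hpos.le
      _ = Real.sqrt |x k| := by field_simp
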